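/- Let K ≥ 2 be an integer and let n2/m2 < n3/m3 be a Farey pair of order K with m2 ≥ 1. Let X, Y > 0 be reals with (n2+n3)/(m2+m3) < Y/X < n3/m3 (if m3 = 0 the upper constraint is vacuous). Then the minimum of |X·n − Y·m| over all coprime pairs (m,n) of nonnegative integers, not both zero, with m ≤ K and n ≤ K equals X·n3 − Y·m3 (in particular it is attained at (m,n) = (m3,n3) and X·n3 − Y·m3 > 0). -/

import Mathlib

/-- Membership in the extended Farey sequence of order `K`:
`(m, n)` is a coprime pair of nonnegative integers, not both zero,
with `m ≤ K` and `n ≤ K`, representing the fraction `n / m`. -/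
def FareyMem (K m n : ℕ) : Prop :=
  Nat.Coprime m n ∧ ¬(m = 0 ∧ n = 0) ∧ m ≤ K ∧ n ≤ K

/-- `n1/m1 < n2/m2` are adjacent terms (a Farey pair) of the extended
Farey sequence of order `K`. -/
def FareyPair (K m1 n1 m2 n2 : ℕ) : Prop :=
  FareyMem K m1 n1 ∧ FareyMem K m2 n2 ∧ n1 * m2 < n2 * m1 ∧
    ¬∃ m n : ℕ, FareyMem K m n ∧ n1 * m < n * m1 ∧ n * m2 < n2 * m

/-- Let `n2/m2 < n3/m3` be a Farey pair of order `K ≥ 2` with `m2 ≥ 1`, and let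
`X, Y > 0` with `(n2+n3)/(m2+m3) < Y/X < n3/m3`, the constraints being stated
in cross-multiplied form so that the upper one is vacuous when `m3 = 0`.
Then the minimum of `|X·n − Y·m|` over all coprime pairs `(m,n)` of nonnegative
integers, not both zero, with `m ≤ K` and `n ≤ K` equals `X·n3 − Y·m3`,
attained at `(m3,n3)`, and this value is positive. -/
lemma farey_det (K m2 n2 m3 n3 : ℕ) (hm2 : 1 ≤ m2)
    (hpair : FareyPair K m2 n2 m3 n3) :
    (n3 : ℤ) * m2 - (n2 : ℤ) * m3 = 1 := by
  obtain ⟨hmem2, hmem3, hlt, hno⟩ := hpair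
  have hn3 : 1 ≤ n3 := Nat.pos_of_ne_zero (by rintro rfl; simp at hlt)
  have hltZ : (n2:ℤ) * m3 < (n3:ℤ) * m2 := by exact_mod_cast hlt
  have hm2Z : (1 : ℤ) ≤ m2 := by exact_mod_cast hm2
  have hn3Z : (1 : ℤ) ≤ n3 := by exact_mod_cast hn3
  have hm2K : (m2 : ℤ) ≤ K := by exact_mod_cast hmem2.2.2.1
  have hn2K : (n2 : ℤ) ≤ K := by exact_mod_cast hmem2.2.2.2
  have hm3K : (m3 : ℤ) ≤ K := by exact_mod_cast hmem3.2.2.1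
  have hn3K : (n3 : ℤ) ≤ K := by exact_mod_cast hmem3.2.2.2
  have hm30 : (0:ℤ) ≤ m3 := Int.ofNat_nonneg m3
  have hn20 : (0:ℤ) ≤ n2 := Int.ofNat_nonneg n2
  have hK0 : (0:ℤ) ≤ K := by linarith
  by_contra hne1
  obtain ⟨D, hD⟩ : ∃ D : ℤ, D = (n3:ℤ)*m2 - n2*m3 := ⟨_, rfl⟩
  have hD1 : 1 ≤ D := by rw [hD]; linarith
  have hD2 : 2 ≤ D := by
    rcases eq_or_lt_of_le hD1 with h | h
    · exact absurd (by rw [← hD, ← h]) hne1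
    · linarith [Int.add_one_le_iff.mpr h]
  obtain ⟨x, y, hxy⟩ := Nat.isCoprime_iff_coprime.mpr hmem2.1
  obtain ⟨a, haDef⟩ : ∃ a : ℤ, a = (m3:ℤ)*x + n3*y := ⟨_, rfl⟩
  have hm3eq : (m3:ℤ) = a * m2 - D * y := by
    rw [haDef, hD]; linear_combination (-(m3:ℤ)) * hxy
  have hn3eq : (n3:ℤ) = a * n2 + D * x := by
    rw [haDef, hD]; linear_combination (-(n3:ℤ)) * hxy
  have hndvd : ¬ D ∣ a := by
    intro hdvd
    obtain ⟨c, hc⟩ := hdvd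
    have h3 : D ∣ (m3:ℤ) := ⟨c*m2 - y, by rw [hm3eq, hc]; ring⟩
    have h4 : D ∣ (n3:ℤ) := ⟨c*n2 + x, by rw [hn3eq, hc]; ring⟩
    have := IsCoprime.isUnit_of_dvd' (Nat.isCoprime_iff_coprime.mpr hmem3.1) h3 h4
    rcases Int.isUnit_iff.mp this with h | h <;> omega
  have hDne : D ≠ 0 := by omega
  have hmod := Int.mul_ediv_add_emod a D
  have hr0 : 0 ≤ a % D := Int.emod_nonneg a hDne
  have hrlt : a % D < D := Int.emod_lt_of_pos a (by omega)
  have hrne : a % D ≠ 0 := fun h => hndvd (Int.dvd_of_emod_eq_zero h)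
  obtain ⟨s, hsDef⟩ : ∃ s : ℤ, s = D - a % D := ⟨_, rfl⟩
  have hs1 : 1 ≤ s := by omega
  have hs2 : s ≤ D - 1 := by omega
  obtain ⟨mp, hmpDef⟩ : ∃ mp : ℤ, mp = -y + (a / D + 1) * m2 := ⟨_, rfl⟩
  obtain ⟨np, hnpDef⟩ : ∃ np : ℤ, np = x + (a / D + 1) * n2 := ⟨_, rfl⟩
  have hdmp : D * mp = s * m2 + m3 := by
    rw [hmpDef, hsDef, hm3eq]; linear_combination (m2:ℤ) * hmod
  have hdnp : D * np = s * n2 + n3 := by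
    rw [hnpDef, hsDef, hn3eq]; linear_combination (n2:ℤ) * hmod
  -- positivity
  have hsm : (1:ℤ) ≤ s * m2 := by
    have := mul_le_mul hs1 hm2Z zero_le_one (by linarith : (0:ℤ) ≤ s)
    linarith
  have hmp1 : 1 ≤ mp := by
    by_contra h
    push_neg at h
    have h' : mp ≤ 0 := by omega
    have := mul_nonpos_of_nonneg_of_nonpos (by linarith : (0:ℤ) ≤ D) h'
    linarith
  have hsn : (0:ℤ) ≤ s * n2 := mul_nonneg (by linarith) hn20
  have hnp1 : 1 ≤ np := by
    by_contra h
    push_neg at h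
    have h' : np ≤ 0 := by omega
    have := mul_nonpos_of_nonneg_of_nonpos (by linarith : (0:ℤ) ≤ D) h'
    linarith
  -- upper bounds
  have hmpK : mp ≤ K := by
    have h1 : s * m2 ≤ s * K := mul_le_mul_of_nonneg_left hm2K (by linarith)
    have h2 : D * mp ≤ D * K := by
      calc D * mp = s * m2 + m3 := hdmp
        _ ≤ s * K + K := by linarith
        _ = (s + 1) * K := by ring
        _ ≤ D * K := mul_le_mul_of_nonneg_right (by linarith) hK0
    exact le_of_mul_le_mul_left h2 (by linarith)
  have hnpK : np ≤ K := by
    have h1 : s * n2 ≤ s * K := mul_le_mul_of_nonneg_left hn2K (by linarith)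
    have h2 : D * np ≤ D * K := by
      calc D * np = s * n2 + n3 := hdnp
        _ ≤ s * K + K := by linarith
        _ = (s + 1) * K := by ring
        _ ≤ D * K := mul_le_mul_of_nonneg_right (by linarith) hK0
    exact le_of_mul_le_mul_left h2 (by linarith)
  -- cross products
  have hc1 : (m2:ℤ) * np - n2 * mp = 1 := by
    rw [hmpDef, hnpDef]; linear_combination hxy
  have hc2 : mp * n3 - np * m3 = s := by
    have h : D * (mp * n3 - np * m3) = D * s := by
      linear_combination (n3:ℤ) * hdmp - (m3:ℤ) * hdnp - s * hD
    exact mul_left_cancel₀ hDne h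
  -- build the contradiction
  have hmpnat : ((mp.toNat : ℤ)) = mp := Int.toNat_of_nonneg (by linarith)
  have hnpnat : ((np.toNat : ℤ)) = np := Int.toNat_of_nonneg (by linarith)
  refine hno ⟨mp.toNat, np.toNat, ⟨?_, ?_, ?_, ?_⟩, ?_, ?_⟩
  · refine Nat.isCoprime_iff_coprime.mp ⟨-(n2:ℤ), (m2:ℤ), ?_⟩
    rw [hmpnat, hnpnat]; linarith
  · rintro ⟨h1, -⟩
    rw [h1] at hmpnat
    simp at hmpnat
    omega
  · have : ((mp.toNat : ℤ)) ≤ (K:ℤ) := by rw [hmpnat]; exact hmpK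
    exact_mod_cast this
  · have : ((np.toNat : ℤ)) ≤ (K:ℤ) := by rw [hnpnat]; exact hnpK
    exact_mod_cast this
  · have : (n2:ℤ) * mp.toNat < np.toNat * m2 := by rw [hmpnat, hnpnat]; linarith
    exact_mod_cast this
  · have : (np.toNat:ℤ) * m3 < n3 * mp.toNat := by rw [hmpnat, hnpnat]; linarith
    exact_mod_cast this
theorem farey_min_dist_upper_half (K m2 n2 m3 n3 : ℕ) (hK : 2 ≤ K) (hm2 : 1 ≤ m2)
    (hpair : FareyPair K m2 n2 m3 n3)
    (X Y : ℝ) (hX : 0 < X) (hY : 0 < Y)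
    (hlow : X * ((n2 : ℝ) + n3) < Y * ((m2 : ℝ) + m3))
    (hhigh : Y * (m3 : ℝ) < X * (n3 : ℝ)) :
    IsLeast {d : ℝ | ∃ m n : ℕ, Nat.Coprime m n ∧ ¬(m = 0 ∧ n = 0) ∧
        m ≤ K ∧ n ≤ K ∧ d = |X * n - Y * m|} (X * n3 - Y * m3) ∧
    0 < X * n3 - Y * m3 := by
  have hdet := farey_det K m2 n2 m3 n3 hm2 hpair
  obtain ⟨hmem2, hmem3, hlt, hno⟩ := hpair
  have hv : 0 < X * n3 - Y * m3 := by linarith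
  have hu : X * n3 - Y * m3 < Y * m2 - X * n2 := by linarith
  have hu0 : 0 < Y * (m2:ℝ) - X * n2 := by linarith
  refine ⟨⟨⟨m3, n3, hmem3.1, hmem3.2.1, hmem3.2.2.1, hmem3.2.2.2, (abs_of_pos hv).symm⟩, ?_⟩, hv⟩
  rintro d ⟨m, n, hcop, hnz, hmK, hnK, rfl⟩
  obtain ⟨a, ha⟩ : ∃ a : ℤ, a = (n3:ℤ) * m - m3 * n := ⟨_, rfl⟩
  obtain ⟨b, hb⟩ : ∃ b : ℤ, b = (n:ℤ) * m2 - m * n2 := ⟨_, rfl⟩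
  have hmZ : (m : ℤ) = a * m2 + b * m3 := by
    rw [ha, hb]; linear_combination (-(m:ℤ)) * hdet
  have hnZ : (n : ℤ) = a * n2 + b * n3 := by
    rw [ha, hb]; linear_combination (-(n:ℤ)) * hdet
  have hmR : (m : ℝ) = (a:ℝ) * m2 + (b:ℝ) * m3 := by exact_mod_cast hmZ
  have hnR : (n : ℝ) = (a:ℝ) * n2 + (b:ℝ) * n3 := by exact_mod_cast hnZ
  have hkey : X * n - Y * m
      = (a:ℝ) * (X * n2 - Y * m2) + (b:ℝ) * (X * n3 - Y * m3) := by
    rw [hmR, hnR]; ring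
  rcases lt_trichotomy a 0 with haneg | hazero | hapos
  · by_cases hbpos : 0 < b
    · -- value ≥ u + v > v
      have ha1 : (a:ℝ) ≤ -1 := by exact_mod_cast (by omega : a ≤ -1)
      have hb1 : (1:ℝ) ≤ (b:ℝ) := by exact_mod_cast (by omega : 1 ≤ b)
      refine le_abs.mpr (Or.inl ?_)
      rw [hkey]
      nlinarith [mul_nonneg (by linarith : (0:ℝ) ≤ -(a:ℝ) - 1) hu0.le,
        mul_nonneg (by linarith : (0:ℝ) ≤ (b:ℝ) - 1) hv.le]
    · -- impossible
      exfalso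
      push_neg at hbpos
      rcases Nat.eq_zero_or_pos n2 with hn2 | hn2
      · -- n2 = 0 forces m2 = 1 and n = 0, then a ≥ 0
        have hb' : b = (n:ℤ) * m2 := by rw [hb, hn2]; push_cast; ring
        have hn0 : (0:ℤ) ≤ (n:ℤ) * m2 :=
          mul_nonneg (Int.ofNat_nonneg n) (Int.ofNat_nonneg m2)
        have hbz : b = 0 := by omega
        have hnz' : n = 0 := by
          have : (n:ℤ) * m2 = 0 := by omega
          rcases mul_eq_zero.mp this with h | h
          · exact_mod_cast h
          · exfalso
            have hm2' : (1:ℤ) ≤ m2 := by exact_mod_cast hm2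
            omega
        have ha' : a = (n3:ℤ) * m := by rw [ha, hnz']; push_cast; ring
        have : (0:ℤ) ≤ (n3:ℤ) * m :=
          mul_nonneg (Int.ofNat_nonneg n3) (Int.ofNat_nonneg m)
        omega
      · have hn2Z : (1:ℤ) ≤ n2 := by exact_mod_cast hn2
        have hA : 1 ≤ (m3:ℤ) * n - n3 * m := by omega
        have h1 : (n2:ℤ) ≤ n2 * ((m3:ℤ) * n - n3 * m) := by
          have := mul_le_mul_of_nonneg_left hA (by linarith : (0:ℤ) ≤ (n2:ℤ))
          linarith
        have hB : (0:ℤ) ≤ (m:ℤ) * n2 - n * m2 := by omega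
        have h2 : (0:ℤ) ≤ (n3:ℤ) * ((m:ℤ) * n2 - n * m2) :=
          mul_nonneg (Int.ofNat_nonneg n3) hB
        have h3 : (n:ℤ) * ((n3:ℤ) * m2 - n2 * m3) = n := by
          linear_combination (n:ℤ) * hdet
        have hn0 : (0:ℤ) ≤ n := Int.ofNat_nonneg n
        nlinarith [h1, h2, h3]
  · -- a = 0 : (m,n) = (m3,n3)
    obtain ⟨x, y, hxy⟩ := Nat.isCoprime_iff_coprime.mpr hcop
    have hm' : (m:ℤ) = b * m3 := by rw [hmZ, hazero]; ring
    have hn' : (n:ℤ) = b * n3 := by rw [hnZ, hazero]; ring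
    have hbdvd : b * (x * m3 + y * n3) = 1 := by
      linear_combination hxy - x * hm' - y * hn'
    have hbunit : IsUnit b := IsUnit.of_mul_eq_one _ hbdvd
    rcases Int.isUnit_iff.mp hbunit with h1 | h1
    · have : X * n - Y * m = X * n3 - Y * m3 := by
        rw [hkey, hazero, h1]; push_cast; ring
      rw [this, abs_of_pos hv]
    · exfalso
      have hm0 : (0:ℤ) ≤ m := Int.ofNat_nonneg m
      have hn0 : (0:ℤ) ≤ n := Int.ofNat_nonneg n
      have hm30 : (0:ℤ) ≤ m3 := Int.ofNat_nonneg m3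
      have hn30 : (0:ℤ) ≤ n3 := Int.ofNat_nonneg n3
      rw [h1] at hm' hn'
      have hm3z : m3 = 0 := by omega
      have hn3z : n3 = 0 := by omega
      exact hmem3.2.1 ⟨hm3z, hn3z⟩
  · by_cases hbpos : 0 < b
    · -- strictly between : contradiction with Farey pair
      exfalso
      apply hno
      refine ⟨m, n, ⟨hcop, hnz, hmK, hnK⟩, ?_, ?_⟩
      · have : (n2:ℤ) * m < (n:ℤ) * m2 := by linarith [hb, hbpos]
        exact_mod_cast this
      · have : (n:ℤ) * m3 < (n3:ℤ) * m := by linarith [ha, hapos]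
        exact_mod_cast this
    · -- value ≤ -u < -v
      push_neg at hbpos
      have ha1 : (1:ℝ) ≤ (a:ℝ) := by exact_mod_cast (by omega : 1 ≤ a)
      have hb1 : (b:ℝ) ≤ 0 := by exact_mod_cast hbpos
      refine le_abs.mpr (Or.inr ?_)
      rw [hkey]
      nlinarith [mul_nonneg (by linarith : (0:ℝ) ≤ (a:ℝ) - 1) hu0.le,
        mul_nonneg (by linarith : (0:ℝ) ≤ -(b:ℝ)) hv.le]
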